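/- arXiv:1811.01543 — 2 statements merged into one kernel-verified Lean document; each statement's English description precedes it below -/
import Mathlib

section
/- Let X be a Hilbert space, G a bounded self-adjoint positive semidefinite operator with square root G^{1/2}, v ∈ X, α > 0. Define J(ψ) = ½‖G^{1/2}ψ‖² − ⟨ψ, v⟩ + α‖ψ‖ and μ = sup{ (⟨ψ,v⟩ − α‖ψ‖)/‖G^{1/2}ψ‖ : ψ ∈ X, G^{1/2}ψ ≠ 0, ⟨ψ,v⟩ − α‖ψ‖ > 0 } ∪ {0} (taking μ = +∞ if there exists ψ with G^{1/2}ψ = 0 and ⟨ψ,v⟩ − α‖ψ‖ > 0). Then −inf_{ψ∈X} J(ψ) = ½ μ² (with the convention that both sides are +∞ simultaneously). -/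
open scoped RealInnerProductSpace

theorem stmt12 {X : Type*} [NormedAddCommGroup X] [InnerProductSpace ℝ X] [CompleteSpace X]
    (G Ghalf : X →L[ℝ] X)
    (hGsa : ∀ x y : X, ⟪G x, y⟫ = ⟪x, G y⟫)
    (hGpos : ∀ x : X, 0 ≤ ⟪G x, x⟫)
    (hGhalf : ∀ ψ : X, ⟪G ψ, ψ⟫ = ‖Ghalf ψ‖ ^ 2)
    (v : X) (α : ℝ) (hα : 0 < α)
    (J : X → ℝ)
    (hJ : ∀ ψ : X, J ψ = (1 / 2) * ‖Ghalf ψ‖ ^ 2 - ⟪ψ, v⟫ + α * ‖ψ‖)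
    (Sμ : Set ℝ)
    (hSμ : Sμ = {q : ℝ | q = 0 ∨ ∃ ψ : X, Ghalf ψ ≠ 0 ∧ 0 < ⟪ψ, v⟫ - α * ‖ψ‖ ∧
      q = (⟪ψ, v⟫ - α * ‖ψ‖) / ‖Ghalf ψ‖}) :
    (BddBelow (Set.range J) ↔
      ((¬ ∃ ψ : X, Ghalf ψ = 0 ∧ 0 < ⟪ψ, v⟫ - α * ‖ψ‖) ∧ BddAbove Sμ)) ∧
    (BddBelow (Set.range J) → - sInf (Set.range J) = (1 / 2) * (sSup Sμ) ^ 2) := by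
  have hscale : ∀ (ψ : X) (t : ℝ), 0 ≤ t →
      J (t • ψ) = (1/2) * t^2 * ‖Ghalf ψ‖^2 - t * (⟪ψ, v⟫ - α * ‖ψ‖) := by
    intro ψ t ht
    rw [hJ, map_smul, norm_smul, real_inner_smul_left, norm_smul,
        Real.norm_eq_abs, abs_of_nonneg ht]
    ring
  have h0mem : (0:ℝ) ∈ Sμ := by rw [hSμ]; exact Or.inl rfl
  have hSnonneg : ∀ q ∈ Sμ, 0 ≤ q := by
    intro q hq
    rw [hSμ] at hq
    rcases hq with h | ⟨ψ, hne, hc, rfl⟩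
    · simp [h]
    · exact le_of_lt (div_pos hc (norm_pos_iff.mpr hne))
  have hattain : ∀ q ∈ Sμ, ∃ ψ : X, J ψ = -((1/2) * q^2) := by
    intro q hq
    rw [hSμ] at hq
    rcases hq with rfl | ⟨ψ, hne, hc, rfl⟩
    · exact ⟨0, by simp [hJ]⟩
    · have hapos : 0 < ‖Ghalf ψ‖ := norm_pos_iff.mpr hne
      refine ⟨((⟪ψ, v⟫ - α * ‖ψ‖) / ‖Ghalf ψ‖^2) • ψ, ?_⟩
      rw [hscale ψ _ (by positivity)]
      field_simp
      ring
  have hlow : (¬ ∃ ψ : X, Ghalf ψ = 0 ∧ 0 < ⟪ψ, v⟫ - α * ‖ψ‖) → ∀ M : ℝ,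
      (∀ q ∈ Sμ, q ≤ M) → ∀ ψ : X, -((1/2) * M^2) ≤ J ψ := by
    intro hnobad M hM ψ
    have hM0 : 0 ≤ M := hM 0 h0mem
    rw [hJ]
    have ha0 : 0 ≤ ‖Ghalf ψ‖ := norm_nonneg _
    by_cases hc : ⟪ψ, v⟫ - α * ‖ψ‖ ≤ 0
    · nlinarith [sq_nonneg ‖Ghalf ψ‖, sq_nonneg M]
    push_neg at hc
    have hane : Ghalf ψ ≠ 0 := by
      intro h
      exact hnobad ⟨ψ, h, hc⟩
    have hapos : 0 < ‖Ghalf ψ‖ := norm_pos_iff.mpr hane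
    have hqmem : (⟪ψ, v⟫ - α * ‖ψ‖) / ‖Ghalf ψ‖ ∈ Sμ := by
      rw [hSμ]; exact Or.inr ⟨ψ, hane, hc, rfl⟩
    have hle := hM _ hqmem
    rw [div_le_iff₀ hapos] at hle
    nlinarith [sq_nonneg (‖Ghalf ψ‖ - M)]
  have hfwd : BddBelow (Set.range J) →
      ((¬ ∃ ψ : X, Ghalf ψ = 0 ∧ 0 < ⟪ψ, v⟫ - α * ‖ψ‖) ∧ BddAbove Sμ) := by
    rintro ⟨m, hm⟩
    constructor
    · rintro ⟨ψ, hzero, hc⟩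
      have htc : 1 - m ≤ max 0 ((1 - m)/(⟪ψ, v⟫ - α * ‖ψ‖)) * (⟪ψ, v⟫ - α * ‖ψ‖) :=
        (div_le_iff₀ hc).mp (le_max_right _ _)
      have h1 := hm (Set.mem_range_self ((max 0 ((1 - m)/(⟪ψ, v⟫ - α * ‖ψ‖))) • ψ))
      rw [hscale ψ _ (le_max_left _ _), hzero] at h1
      simp only [norm_zero] at h1
      nlinarith
    · refine ⟨Real.sqrt (-(2*m)), ?_⟩
      intro q hq
      obtain ⟨ψ, hψ⟩ := hattain q hq
      have h1 := hm (Set.mem_range_self ψ)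
      rw [hψ] at h1
      have hq0 := hSnonneg q hq
      have hq2 : q^2 ≤ -(2*m) := by linarith
      calc q = Real.sqrt (q^2) := (Real.sqrt_sq hq0).symm
        _ ≤ Real.sqrt (-(2*m)) := Real.sqrt_le_sqrt hq2
  have hbwd : ((¬ ∃ ψ : X, Ghalf ψ = 0 ∧ 0 < ⟪ψ, v⟫ - α * ‖ψ‖) ∧ BddAbove Sμ) →
      BddBelow (Set.range J) := by
    rintro ⟨hnobad, hbdd⟩
    refine ⟨-((1/2) * (sSup Sμ)^2), ?_⟩
    rintro y ⟨ψ, rfl⟩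
    exact hlow hnobad _ (fun q hq => le_csSup hbdd hq) ψ
  refine ⟨⟨hfwd, hbwd⟩, ?_⟩
  intro hbb
  obtain ⟨hnobad, hbddS⟩ := hfwd hbb
  have hM : ∀ q ∈ Sμ, q ≤ sSup Sμ := fun q hq => le_csSup hbddS hq
  have hM0 : 0 ≤ sSup Sμ := hM 0 h0mem
  have hlow' : -((1/2) * (sSup Sμ)^2) ≤ sInf (Set.range J) :=
    le_csInf ⟨J 0, Set.mem_range_self 0⟩ (by rintro y ⟨ψ, rfl⟩; exact hlow hnobad _ hM ψ)
  have hinfle : ∀ q ∈ Sμ, sInf (Set.range J) ≤ -((1/2)*q^2) := by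
    intro q hq
    obtain ⟨ψ, hψ⟩ := hattain q hq
    exact hψ ▸ csInf_le hbb (Set.mem_range_self ψ)
  have hs0 : sInf (Set.range J) ≤ 0 := by
    have := hinfle 0 h0mem; simpa using this
  have hub : sSup Sμ ≤ Real.sqrt (-(2 * sInf (Set.range J))) := by
    apply csSup_le ⟨0, h0mem⟩
    intro q hq
    have h1 := hinfle q hq
    have hq0 := hSnonneg q hq
    have hq2 : q^2 ≤ -(2 * sInf (Set.range J)) := by linarith
    calc q = Real.sqrt (q^2) := (Real.sqrt_sq hq0).symm
      _ ≤ _ := Real.sqrt_le_sqrt hq2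
  have hM2 : (sSup Sμ)^2 ≤ -(2 * sInf (Set.range J)) := by
    have h2 := mul_le_mul hub hub hM0 (Real.sqrt_nonneg _)
    rw [Real.mul_self_sqrt (by linarith)] at h2
    nlinarith
  linarith
end

section
/- Let (S(t))_{t≥0} be a C₀-group of bounded operators on a Hilbert space X (i.e., S(t) is invertible for each t with S(t)^{-1} = S(−t)), with ‖S(t)‖ ≤ M e^{ω|t|} for all t ∈ ℝ, where M ≥ 1, ω ≥ 0. Fix T > 0, a bounded operator B : U → X, and suppose there exist C > 0 and α ∈ (0,1) with α M e^{ωT} < 1 such that ‖S(T)*ψ‖ ≤ C‖B*S(T−·)*ψ‖_{L²(0,T;U)} + α‖ψ‖ for all ψ ∈ X. Then the exact observability inequality holds: ‖ψ‖ ≤ C' ‖B*S(T−·)*ψ‖_{L²(0,T;U)} for all ψ ∈ X, with C' = C M e^{ωT}/(1 − α M e^{ωT}). -/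
theorem stmt17 {X U : Type*} [NormedAddCommGroup X] [InnerProductSpace ℝ X] [CompleteSpace X]
    [NormedAddCommGroup U] [InnerProductSpace ℝ U] [CompleteSpace U]
    (S : ℝ → X →L[ℝ] X) (hS0 : S 0 = 1)
    (hgroup : ∀ s t : ℝ, S (s + t) = (S s).comp (S t))
    (M ω : ℝ) (hM : 1 ≤ M) (hω : 0 ≤ ω)
    (hbound : ∀ t : ℝ, ‖S t‖ ≤ M * Real.exp (ω * |t|))
    (T : ℝ) (hT : 0 < T) (B : U →L[ℝ] X) (C α : ℝ) (hC : 0 < C)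
    (hα0 : 0 < α) (hα1 : α < 1) (hsmall : α * M * Real.exp (ω * T) < 1)
    (hobs : ∀ ψ : X, ‖(S T).adjoint ψ‖ ≤
      C * Real.sqrt (∫ t in (0:ℝ)..T, ‖B.adjoint ((S (T - t)).adjoint ψ)‖ ^ 2) + α * ‖ψ‖) :
    ∀ ψ : X, ‖ψ‖ ≤ (C * M * Real.exp (ω * T) / (1 - α * M * Real.exp (ω * T))) *
      Real.sqrt (∫ t in (0:ℝ)..T, ‖B.adjoint ((S (T - t)).adjoint ψ)‖ ^ 2) := by
  intro ψ
  set K := M * Real.exp (ω * T) with hKdef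
  have hK1 : 1 ≤ K := by
    have := Real.one_le_exp (by positivity : (0:ℝ) ≤ ω * T)
    nlinarith
  have hKpos : 0 < 1 - α * K := by
    have : α * K = α * M * Real.exp (ω * T) := by rw [hKdef]; ring
    linarith [hsmall, this ▸ hsmall]
  -- S T ∘ S (-T) = 1
  have hc : (S T).comp (S (-T)) = 1 := by
    rw [← hgroup]; norm_num [hS0]
  have hadj : (S (-T)).adjoint.comp (S T).adjoint = 1 := by
    rw [← ContinuousLinearMap.adjoint_comp, hc, ContinuousLinearMap.one_def,
      ContinuousLinearMap.adjoint_id, ← ContinuousLinearMap.one_def]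
  have hψeq : (S (-T)).adjoint ((S T).adjoint ψ) = ψ := by
    have := congrArg (fun f => f ψ) hadj
    simpa using this
  have hnormadj : ‖(S (-T)).adjoint‖ ≤ K := by
    have he : ‖(S (-T)).adjoint‖ = ‖S (-T)‖ :=
      ContinuousLinearMap.adjoint.norm_map (S (-T))
    rw [he]
    have := hbound (-T)
    simpa [abs_of_pos hT, hKdef] using this
  have h1 : ‖ψ‖ ≤ K * ‖(S T).adjoint ψ‖ := by
    calc ‖ψ‖ = ‖(S (-T)).adjoint ((S T).adjoint ψ)‖ := by rw [hψeq]
    _ ≤ ‖(S (-T)).adjoint‖ * ‖(S T).adjoint ψ‖ := (S (-T)).adjoint.le_opNorm _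
    _ ≤ K * ‖(S T).adjoint ψ‖ := by
        apply mul_le_mul_of_nonneg_right hnormadj (norm_nonneg _)
  set r := Real.sqrt (∫ t in (0:ℝ)..T, ‖B.adjoint ((S (T - t)).adjoint ψ)‖ ^ 2) with hr
  have hr0 : 0 ≤ r := Real.sqrt_nonneg _
  have h2 := hobs ψ
  have hn0 : 0 ≤ ‖ψ‖ := norm_nonneg _
  have hKpos' : 0 < 1 - α * M * Real.exp (ω * T) := by
    rw [hKdef] at hKpos; linarith
  rw [div_mul_eq_mul_div, le_div_iff₀ hKpos']
  nlinarith [hKdef, mul_le_mul_of_nonneg_left h2 (le_trans zero_le_one hK1 : (0:ℝ) ≤ K), mul_nonneg hC.le hr0]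
end
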